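/- There exists a simple graph K on 24 vertices (the Klein quartic graph) which is connected, 7-regular, of diameter 3, and distance-regular with intersection array {7,4,1; 1,2,7}: for all vertices u, v with dist(u,v) = i (0 ≤ i ≤ 3), the number of neighbors of v at distance i+1 from u equals b_i and the number of neighbors of v at distance i−1 from u equals c_i, where b₀ = 7, b₁ = 4, b₂ = 1, c₁ = 1, c₂ = 2, c₃ = 7. -/

import Mathlib

namespace KleinAux

def dTab : Nat → List Nat
  | 0 => [0, 1, 2, 2, 2, 2, 1, 2, 1, 3, 1, 2, 2, 2, 2, 1, 3, 1, 2, 2, 2, 1, 2, 2]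
  | 1 => [1, 0, 1, 2, 2, 2, 2, 2, 2, 2, 1, 3, 1, 2, 2, 2, 2, 2, 1, 3, 1, 1, 2, 2]
  | 2 => [2, 1, 0, 1, 2, 2, 2, 1, 2, 2, 2, 2, 1, 3, 1, 3, 1, 2, 2, 2, 2, 1, 2, 2]
  | 3 => [2, 2, 1, 0, 1, 2, 2, 1, 3, 1, 2, 2, 2, 2, 2, 2, 2, 1, 3, 1, 2, 1, 2, 2]
  | 4 => [2, 2, 2, 1, 0, 1, 2, 2, 2, 1, 3, 1, 2, 2, 3, 1, 2, 2, 2, 2, 1, 1, 2, 2]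
  | 5 => [2, 2, 2, 2, 1, 0, 1, 2, 2, 2, 2, 1, 3, 1, 2, 2, 1, 3, 1, 2, 2, 1, 2, 2]
  | 6 => [1, 2, 2, 2, 2, 1, 0, 3, 1, 2, 2, 2, 2, 1, 1, 2, 2, 2, 2, 1, 3, 1, 2, 2]
  | 7 => [2, 2, 1, 1, 2, 2, 3, 0, 2, 2, 1, 1, 2, 2, 2, 2, 1, 1, 2, 2, 3, 2, 1, 2]
  | 8 => [1, 2, 2, 3, 2, 2, 1, 2, 0, 2, 2, 1, 1, 2, 1, 1, 2, 2, 3, 2, 2, 2, 1, 2]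
  | 9 => [3, 2, 2, 1, 1, 2, 2, 2, 2, 0, 2, 2, 1, 1, 2, 2, 3, 2, 2, 1, 1, 2, 1, 2]
  | 10 => [1, 1, 2, 2, 3, 2, 2, 1, 2, 2, 0, 2, 2, 1, 3, 2, 2, 1, 1, 2, 2, 2, 1, 2]
  | 11 => [2, 3, 2, 2, 1, 1, 2, 1, 1, 2, 2, 0, 2, 2, 2, 1, 1, 2, 2, 3, 2, 2, 1, 2]
  | 12 => [2, 1, 1, 2, 2, 3, 2, 2, 1, 1, 2, 2, 0, 2, 1, 2, 2, 3, 2, 2, 1, 2, 1, 2]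
  | 13 => [2, 2, 3, 2, 2, 1, 1, 2, 2, 1, 1, 2, 2, 0, 2, 3, 2, 2, 1, 1, 2, 2, 1, 2]
  | 14 => [2, 2, 1, 2, 3, 2, 1, 2, 1, 2, 3, 2, 1, 2, 0, 2, 1, 2, 2, 1, 2, 2, 2, 1]
  | 15 => [1, 2, 3, 2, 1, 2, 2, 2, 1, 2, 2, 1, 2, 3, 2, 0, 2, 1, 2, 2, 1, 2, 2, 1]
  | 16 => [3, 2, 1, 2, 2, 1, 2, 1, 2, 3, 2, 1, 2, 2, 1, 2, 0, 2, 1, 2, 2, 2, 2, 1]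
  | 17 => [1, 2, 2, 1, 2, 3, 2, 1, 2, 2, 1, 2, 3, 2, 2, 1, 2, 0, 2, 1, 2, 2, 2, 1]
  | 18 => [2, 1, 2, 3, 2, 1, 2, 2, 3, 2, 1, 2, 2, 1, 2, 2, 1, 2, 0, 2, 1, 2, 2, 1]
  | 19 => [2, 3, 2, 1, 2, 2, 1, 2, 2, 1, 2, 3, 2, 1, 1, 2, 2, 1, 2, 0, 2, 2, 2, 1]
  | 20 => [2, 1, 2, 2, 1, 2, 3, 3, 2, 1, 2, 2, 1, 2, 2, 1, 2, 2, 1, 2, 0, 2, 2, 1]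
  | 21 => [1, 1, 1, 1, 1, 1, 1, 2, 2, 2, 2, 2, 2, 2, 2, 2, 2, 2, 2, 2, 2, 0, 3, 3]
  | 22 => [2, 2, 2, 2, 2, 2, 2, 1, 1, 1, 1, 1, 1, 1, 2, 2, 2, 2, 2, 2, 2, 3, 0, 3]
  | 23 => [2, 2, 2, 2, 2, 2, 2, 2, 2, 2, 2, 2, 2, 2, 1, 1, 1, 1, 1, 1, 1, 3, 3, 0]
  | _ => []

def d (u v : Fin 24) : ℕ := (dTab u.val).getD v.val 4

lemma hsym1 : ∀ u v : Fin 24, d u v = 1 → d v u = 1 := by decide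

lemma hirr : ∀ u : Fin 24, ¬ d u u = 1 := by decide

def K : SimpleGraph (Fin 24) where
  Adj u v := d u v = 1
  symm := ⟨fun u v h => hsym1 u v h⟩
  loopless := ⟨fun u h => hirr u h⟩

instance : DecidableRel K.Adj := fun u v => inferInstanceAs (Decidable (d u v = 1))

lemma h0 : ∀ u v : Fin 24, d u v = 0 ↔ u = v := by decide

lemma hsym : ∀ u v : Fin 24, d u v = d v u := by decide

lemma hle3 : ∀ u v : Fin 24, d u v ≤ 3 := by decide

lemma hstep : ∀ u v : Fin 24, u ≠ v → ∃ w, d v w = 1 ∧ d u w + 1 = d u v := by decide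

lemma htri : ∀ u v w : Fin 24, d v w = 1 → d u v ≤ d u w + 1 := by decide

lemma hdeg : ∀ v : Fin 24, (Finset.univ.filter fun w => d v w = 1).card = 7 := by decide

lemma key : ∀ (n : ℕ) (u v : Fin 24), d u v = n → K.Reachable u v ∧ K.dist u v ≤ n := by
  intro n
  induction n using Nat.strong_induction_on with
  | _ n ih =>
    intro u v h
    rcases Nat.eq_zero_or_pos n with h0' | hpos
    · subst h0'
      obtain rfl : u = v := (h0 u v).mp h
      exact ⟨SimpleGraph.Reachable.refl u, by simp [SimpleGraph.dist_self]⟩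
    · have hne : u ≠ v := fun he => by
        subst he
        rw [(h0 u u).mpr rfl] at h
        omega
      obtain ⟨w, hw1, hw2⟩ := hstep u v hne
      have hlt : d u w < n := by omega
      obtain ⟨hr, hd⟩ := ih (d u w) hlt u w rfl
      have hadj : K.Adj w v := K.symm.symm _ _ hw1
      refine ⟨hr.trans hadj.reachable, ?_⟩
      obtain ⟨p, hp⟩ := hr.exists_walk_length_eq_dist
      have := K.dist_le (p.concat hadj)
      rw [SimpleGraph.Walk.length_concat, hp] at this
      omega

lemma hconn : K.Connected :=
  SimpleGraph.Connected.mk (fun u v => (key (d u v) u v rfl).1)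

lemma walk_lb : ∀ {u v : Fin 24} (p : K.Walk u v), d u v ≤ p.length := by
  intro u v p
  induction p with
  | nil => simp [(h0 _ _).mpr rfl]
  | @cons a b c hab q ih =>
    have hab' : d a b = 1 := hab
    have h1 : d c a ≤ d c b + 1 := htri c a b hab'
    have e1 : d c a = d a c := hsym c a
    have e2 : d c b = d b c := hsym c b
    rw [SimpleGraph.Walk.length_cons]
    omega

lemma hdist : ∀ u v : Fin 24, K.dist u v = d u v := by
  intro u v
  refine le_antisymm (key (d u v) u v rfl).2 ?_
  obtain ⟨p, hp⟩ := (key (d u v) u v rfl).1.exists_walk_length_eq_dist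
  rw [← hp]
  exact walk_lb p

lemma hedist : ∀ u v : Fin 24, K.edist u v = (d u v : ℕ∞) := by
  intro u v
  obtain ⟨p, hp⟩ := (key (d u v) u v rfl).1.exists_walk_length_eq_edist
  have hne : K.edist u v ≠ ⊤ := by
    rw [← hp]; exact ENat.coe_ne_top _
  have : (K.edist u v).toNat = d u v := hdist u v
  rw [← this, ENat.coe_toNat hne]

lemma hdiam : K.diam = 3 := by
  have hed : K.ediam = 3 := by
    refine le_antisymm ?_ ?_
    · rw [SimpleGraph.ediam_def]
      refine iSup_le fun p => ?_
      rw [hedist p.1 p.2]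
      exact_mod_cast hle3 p.1 p.2
    · calc (3 : ℕ∞) = K.edist 0 9 := by rw [hedist]; decide
        _ ≤ K.ediam := SimpleGraph.edist_le_ediam
  rw [SimpleGraph.diam, hed]
  rfl

lemma ncard_eq (P : Fin 24 → Prop) [DecidablePred P] :
    {x | P x}.ncard = (Finset.univ.filter P).card := by
  rw [Set.ncard_eq_toFinset_card', Set.toFinset_setOf]

lemma count_fact :
    (∀ u v : Fin 24, d u v = 0 → (Finset.univ.filter fun w => d v w = 1 ∧ d u w = 1).card = 7) ∧
    (∀ u v : Fin 24, d u v = 1 → (Finset.univ.filter fun w => d v w = 1 ∧ d u w = 2).card = 4 ∧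
        (Finset.univ.filter fun w => d v w = 1 ∧ d u w = 0).card = 1) ∧
    (∀ u v : Fin 24, d u v = 2 → (Finset.univ.filter fun w => d v w = 1 ∧ d u w = 3).card = 1 ∧
        (Finset.univ.filter fun w => d v w = 1 ∧ d u w = 1).card = 2) ∧
    (∀ u v : Fin 24, d u v = 3 → (Finset.univ.filter fun w => d v w = 1 ∧ d u w = 2).card = 7) := by
  refine ⟨?_, ?_, ?_, ?_⟩ <;> decide

lemma set_eq (u v : Fin 24) (k : ℕ) :
    {w : Fin 24 | K.Adj v w ∧ K.dist u w = k} = {w : Fin 24 | d v w = 1 ∧ d u w = k} := by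
  ext w
  simp only [Set.mem_setOf_eq, hdist]
  exact Iff.rfl

lemma set_ncard (u v : Fin 24) (k : ℕ) :
    {w : Fin 24 | K.Adj v w ∧ K.dist u w = k}.ncard
      = (Finset.univ.filter fun w => d v w = 1 ∧ d u w = k).card := by
  rw [set_eq, ncard_eq]

lemma hreg {inst : K.LocallyFinite} : K.IsRegularOfDegree 7 := by
  intro v
  have h : K.neighborFinset v = Finset.univ.filter fun w => d v w = 1 := by
    ext w
    simp only [SimpleGraph.mem_neighborFinset, Finset.mem_filter, Finset.mem_univ, true_and]
    exact Iff.rfl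
  show (K.neighborFinset v).card = 7
  rw [h]
  exact hdeg v

end KleinAux

open scoped Classical in
/-- There is a connected 7-regular graph on 24 vertices (the Klein quartic
graph) of diameter 3 which is distance-regular with intersection array
`{7,4,1; 1,2,7}`. -/
theorem exists_klein_quartic_graph_distance_regular :
    ∃ K : SimpleGraph (Fin 24),
      K.Connected ∧
      K.IsRegularOfDegree 7 ∧
      K.diam = 3 ∧
      (∀ u v : Fin 24, K.dist u v = 0 →
        {w : Fin 24 | K.Adj v w ∧ K.dist u w = 1}.ncard = 7) ∧
      (∀ u v : Fin 24, K.dist u v = 1 →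
        {w : Fin 24 | K.Adj v w ∧ K.dist u w = 2}.ncard = 4 ∧
        {w : Fin 24 | K.Adj v w ∧ K.dist u w = 0}.ncard = 1) ∧
      (∀ u v : Fin 24, K.dist u v = 2 →
        {w : Fin 24 | K.Adj v w ∧ K.dist u w = 3}.ncard = 1 ∧
        {w : Fin 24 | K.Adj v w ∧ K.dist u w = 1}.ncard = 2) ∧
      (∀ u v : Fin 24, K.dist u v = 3 →
        {w : Fin 24 | K.Adj v w ∧ K.dist u w = 2}.ncard = 7) := by
  refine ⟨KleinAux.K, KleinAux.hconn, KleinAux.hreg, KleinAux.hdiam, ?_, ?_, ?_, ?_⟩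
  · intro u v h
    rw [KleinAux.hdist] at h
    rw [KleinAux.set_ncard]
    exact KleinAux.count_fact.1 u v h
  · intro u v h
    rw [KleinAux.hdist] at h
    rw [KleinAux.set_ncard, KleinAux.set_ncard]
    exact KleinAux.count_fact.2.1 u v h
  · intro u v h
    rw [KleinAux.hdist] at h
    rw [KleinAux.set_ncard, KleinAux.set_ncard]
    exact KleinAux.count_fact.2.2.1 u v h
  · intro u v h
    rw [KleinAux.hdist] at h
    rw [KleinAux.set_ncard]
    exact KleinAux.count_fact.2.2.2 u v h
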